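/- arXiv:1806.04211 — 2 statements merged into one kernel-verified Lean document; each statement's English description precedes it below -/
import Mathlib

section
/- Let α be a positive integer. The image of the map ρ ↦ p_ρ, defined on all 2^α subsets ρ of {1,…,α}, consists of exactly 2^α − α permutations of {1,…,α}. (All α+1 initial segments {1,…,i}, 0 ≤ i ≤ α, map to the identity, and the map is injective on the remaining subsets.) -/
/-- The map `p_ρ : {1,…,α} → {1,…,α}` associated to a subset `ρ ⊆ {1,…,α}` of
cardinality `s`: it sends the first `s` positions to the elements of `ρ` in increasing
order and the remaining positions to the elements of the complement of `ρ` in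
increasing order. -/
def pFun {n : ℕ} (ρ : Finset (Fin n)) : Fin n → Fin n :=
  fun i =>
    if h : (i : ℕ) < ρ.card then ρ.orderEmbOfFin rfl ⟨(i : ℕ), h⟩
    else ρᶜ.orderEmbOfFin (k := n - ρ.card) (by simp [Finset.card_compl])
      ⟨(i : ℕ) - ρ.card, by have := i.isLt; omega⟩

namespace PFunAux

variable {n : ℕ}

lemma card_le (ρ : Finset (Fin n)) : ρ.card ≤ n := by
  simpa using Finset.card_le_univ ρ

lemma apply_lt {ρ : Finset (Fin n)} {i : Fin n} (h : (i : ℕ) < ρ.card) :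
    pFun ρ i = ρ.orderEmbOfFin rfl ⟨(i : ℕ), h⟩ := dif_pos h

lemma apply_ge {ρ : Finset (Fin n)} {i : Fin n} (h : ¬ (i : ℕ) < ρ.card) :
    pFun ρ i = ρᶜ.orderEmbOfFin (k := n - ρ.card) (by simp [Finset.card_compl])
      ⟨(i : ℕ) - ρ.card, by have := i.isLt; omega⟩ := dif_neg h

lemma mem_of_lt {ρ : Finset (Fin n)} {i : Fin n} (h : (i : ℕ) < ρ.card) :
    pFun ρ i ∈ ρ := by
  rw [apply_lt h]; exact Finset.orderEmbOfFin_mem _ _ _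

lemma mem_compl_of_ge {ρ : Finset (Fin n)} {i : Fin n} (h : ¬ (i : ℕ) < ρ.card) :
    pFun ρ i ∈ ρᶜ := by
  rw [apply_ge h]; exact Finset.orderEmbOfFin_mem _ _ _

lemma lt_piece1 {ρ : Finset (Fin n)} {i j : Fin n} (hij : i < j) (hj : (j : ℕ) < ρ.card) :
    pFun ρ i < pFun ρ j := by
  have hi : (i : ℕ) < ρ.card := lt_trans hij hj
  rw [apply_lt hi, apply_lt hj]
  exact (ρ.orderEmbOfFin rfl).strictMono (show ((⟨(i : ℕ), hi⟩ : Fin ρ.card) < ⟨(j : ℕ), hj⟩) from hij)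

lemma lt_piece2 {ρ : Finset (Fin n)} {i j : Fin n} (hi : ρ.card ≤ (i : ℕ)) (hij : i < j) :
    pFun ρ i < pFun ρ j := by
  have hi' : ¬ (i : ℕ) < ρ.card := not_lt.mpr hi
  have hj' : ¬ (j : ℕ) < ρ.card := not_lt.mpr (le_trans hi (le_of_lt hij))
  rw [apply_ge hi', apply_ge hj']
  refine (ρᶜ.orderEmbOfFin _).strictMono ?_
  have hij' : (i : ℕ) < (j : ℕ) := hij
  exact Fin.mk_lt_mk.mpr (by omega)

lemma pFun_injective (ρ : Finset (Fin n)) : Function.Injective (pFun ρ) := by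
  intro i j h
  by_cases hi : (i : ℕ) < ρ.card <;> by_cases hj : (j : ℕ) < ρ.card
  · rw [apply_lt hi, apply_lt hj] at h
    have h2 := congrArg Fin.val ((ρ.orderEmbOfFin rfl).injective h)
    exact Fin.ext h2
  · exact absurd (mem_of_lt hi) (by rw [h]; simpa using mem_compl_of_ge hj)
  · exact absurd (mem_of_lt hj) (by rw [← h]; simpa using mem_compl_of_ge hi)
  · rw [apply_ge hi, apply_ge hj] at h
    have h2 : (i : ℕ) - ρ.card = (j : ℕ) - ρ.card :=
      congrArg Fin.val ((ρᶜ.orderEmbOfFin _).injective h)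
    exact Fin.ext (by omega)

lemma strictMono_eq_id {f : Fin n → Fin n} (hf : StrictMono f) : f = id := by
  have h : (Finset.univ : Finset (Fin n)).card = n := by simp
  rw [Finset.orderEmbOfFin_unique h (fun x => Finset.mem_univ _) hf,
      ← Finset.orderEmbOfFin_unique h (fun x => Finset.mem_univ _)
        (strictMono_id (α := Fin n))]

/-- The initial segment `{0, …, s-1}` of `Fin n`. -/
def seg (s : ℕ) : Finset (Fin n) := Finset.univ.filter (fun x => (x : ℕ) < s)

lemma card_seg {s : ℕ} (hs : s ≤ n) : (seg (n := n) s).card = s := by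
  rw [show seg (n := n) s = Finset.map (Fin.castLEEmb hs) Finset.univ by
    ext x
    simp only [seg, Finset.mem_filter, Finset.mem_univ, true_and, Finset.mem_map,
      Fin.castLEEmb_apply]
    constructor
    · intro hx; exact ⟨⟨(x : ℕ), hx⟩, Fin.ext rfl⟩
    · rintro ⟨a, rfl⟩; exact a.isLt]
  simp

lemma pFun_seg {s : ℕ} (hs : s ≤ n) : pFun (seg (n := n) s) = id := by
  apply strictMono_eq_id
  intro i j hij
  have hcard : (seg (n := n) s).card = s := card_seg hs
  by_cases hj : (j : ℕ) < (seg (n := n) s).card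
  · exact lt_piece1 hij hj
  · by_cases hi : (i : ℕ) < (seg (n := n) s).card
    · have h1 : pFun (seg (n := n) s) i ∈ seg (n := n) s := mem_of_lt hi
      have h2 : pFun (seg (n := n) s) j ∈ (seg (n := n) s)ᶜ := mem_compl_of_ge hj
      have h1' : (pFun (seg (n := n) s) i : ℕ) < s := by
        simpa [seg] using h1
      have h2' : ¬ (pFun (seg (n := n) s) j : ℕ) < s := by
        simpa [seg] using h2
      exact Fin.lt_def.mpr (by omega)
    · exact lt_piece2 (not_lt.mp hi) hij

lemma exists_apply_eq {ρ : Finset (Fin n)} {x : Fin n} (hx : x ∈ ρ) :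
    ∃ i : Fin n, (i : ℕ) < ρ.card ∧ pFun ρ i = x := by
  have : x ∈ Set.range (ρ.orderEmbOfFin rfl) := by
    rw [Finset.range_orderEmbOfFin]; exact hx
  obtain ⟨j, hj⟩ := this
  refine ⟨⟨(j : ℕ), lt_of_lt_of_le j.isLt (card_le ρ)⟩, j.isLt, ?_⟩
  rw [apply_lt (ρ := ρ) (i := ⟨(j : ℕ), lt_of_lt_of_le j.isLt (card_le ρ)⟩) j.isLt]
  convert hj using 2

lemma eq_seg_of_id {ρ : Finset (Fin n)} (h : pFun ρ = id) : ρ = seg ρ.card := by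
  ext x
  simp only [seg, Finset.mem_filter, Finset.mem_univ, true_and]
  constructor
  · intro hx
    obtain ⟨i, hi, hix⟩ := exists_apply_eq hx
    rw [h] at hix
    simpa [← hix] using hi
  · intro hx
    have := mem_of_lt (ρ := ρ) (i := x) hx
    rwa [h, id_eq] at this

lemma eq_of_card_eq {ρ σ : Finset (Fin n)} (h : pFun ρ = pFun σ) (hc : ρ.card = σ.card) :
    ρ = σ := by
  refine Finset.eq_of_subset_of_card_le (fun x hx => ?_) (le_of_eq hc.symm)
  obtain ⟨i, hi, hix⟩ := exists_apply_eq hx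
  rw [h] at hix
  rw [← hix]
  exact mem_of_lt (by omega)

lemma pFun_eq_id_of_card_lt {ρ σ : Finset (Fin n)} (h : pFun ρ = pFun σ)
    (hc : ρ.card < σ.card) : pFun ρ = id := by
  apply strictMono_eq_id
  intro i j hij
  by_cases hj : (j : ℕ) < σ.card
  · rw [h]; exact lt_piece1 hij hj
  · by_cases hi : (i : ℕ) < ρ.card
    · have hmn : ρ.card < n := lt_of_lt_of_le hc (card_le σ)
      set m : Fin n := ⟨ρ.card, hmn⟩ with hm
      have h1 : pFun ρ i < pFun ρ m := by
        rw [h]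
        exact lt_piece1 (Fin.lt_def.mpr (by simp [hm]; omega)) (by simpa [hm] using hc)
      have h2 : pFun ρ m < pFun ρ j := by
        refine lt_piece2 (by simp [hm]) (Fin.lt_def.mpr ?_)
        simp only [hm]
        omega
      exact h1.trans h2
    · exact lt_piece2 (not_lt.mp hi) hij

lemma eq_of_pFun_eq {ρ σ : Finset (Fin n)} (h : pFun ρ = pFun σ) (hne : pFun ρ ≠ id) :
    ρ = σ := by
  rcases lt_trichotomy ρ.card σ.card with hc | hc | hc
  · exact absurd (pFun_eq_id_of_card_lt h hc) hne
  · exact eq_of_card_eq h hc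
  · refine absurd (pFun_eq_id_of_card_lt h.symm hc) ?_
    rw [← h]; exact hne

end PFunAux

open PFunAux in
/-- The image of the map `ρ ↦ p_ρ`, defined on all `2^α` subsets `ρ` of `{1,…,α}`,
consists of exactly `2^α − α` permutations of `{1,…,α}`. -/
theorem pFun_image_card {α : ℕ} (hα : 0 < α) :
    (Finset.univ.image (fun ρ : Finset (Fin α) => pFun ρ)).card = 2 ^ α - α := by
  classical
  set Fib : Finset (Finset (Fin α)) := Finset.univ.filter (fun ρ => pFun ρ = id) with hFib
  have hFibcard : Fib.card = α + 1 := by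
    have hFibeq : Fib = Finset.image (fun s : Fin (α + 1) => seg (n := α) (s : ℕ))
        Finset.univ := by
      ext ρ
      simp only [hFib, Finset.mem_filter, Finset.mem_univ, true_and, Finset.mem_image]
      constructor
      · intro h
        exact ⟨⟨ρ.card, Nat.lt_succ_of_le (card_le ρ)⟩, (eq_seg_of_id h).symm⟩
      · rintro ⟨s, rfl⟩
        exact pFun_seg (Nat.lt_succ_iff.mp s.isLt)
    rw [hFibeq, Finset.card_image_of_injective _ ?_, Finset.card_univ, Fintype.card_fin]
    intro a b hab
    have hab' : seg (n := α) (a : ℕ) = seg (n := α) (b : ℕ) := hab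
    apply Fin.ext
    rw [← card_seg (n := α) (Nat.lt_succ_iff.mp a.isLt),
      ← card_seg (n := α) (Nat.lt_succ_iff.mp b.isLt), hab']
  have himage : Finset.univ.image (fun ρ : Finset (Fin α) => pFun ρ)
      = insert (id : Fin α → Fin α) (Fibᶜ.image (fun ρ => pFun ρ)) := by
    ext f
    simp only [Finset.mem_image, Finset.mem_insert, Finset.mem_univ, true_and,
      Finset.mem_compl, hFib, Finset.mem_filter]
    constructor
    · rintro ⟨ρ, rfl⟩
      by_cases h : pFun ρ = id
      · exact Or.inl h
      · exact Or.inr ⟨ρ, by simpa using h, rfl⟩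
    · rintro (rfl | ⟨ρ, -, rfl⟩)
      · exact ⟨seg 0, pFun_seg (Nat.zero_le α)⟩
      · exact ⟨ρ, rfl⟩
  have hnotmem : (id : Fin α → Fin α) ∉ Fibᶜ.image (fun ρ => pFun ρ) := by
    simp only [Finset.mem_image, Finset.mem_compl, hFib, Finset.mem_filter, Finset.mem_univ,
      true_and, not_exists, not_and]
    intro ρ hρ
    exact fun h => hρ (by simp [h.symm])
  have hinj : Set.InjOn (fun ρ : Finset (Fin α) => pFun ρ) ↑(Fibᶜ) := by
    intro ρ hρ σ hσ h
    simp only [Finset.coe_filter, Finset.mem_coe, Finset.mem_compl, hFib, Finset.mem_filter,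
      Finset.mem_univ, true_and] at hρ
    exact eq_of_pFun_eq h hρ
  have hpow : α + 1 ≤ 2 ^ α := Nat.lt_two_pow_self (n := α)
  rw [himage, Finset.card_insert_of_notMem hnotmem, Finset.card_image_of_injOn hinj,
    Finset.card_compl, hFibcard, Fintype.card_finset, Fintype.card_fin]
  omega
end

section
/- Let F be a field, β and r positive integers, γ ⊆ {1,…,β} a subset of cardinality r, and H₁ an r×β matrix over F such that H₁·γ^tr = −1_r (the columns of H₁ indexed by γ form the negative identity matrix); set R₀ := H₁·γ̄^tr. Then for every α×β matrix C over F, the rank of the (r+α)×β matrix obtained by stacking H₁ on top of C equals r + rank(C·γ̄^tr + (C·γ^tr)·R₀). (This is the mathematical content of the ClearDown step: the pivotal columns of C are cleared using the echelonised rows H₁, and only the updated non-pivotal columns contribute additional rank.) -/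
open Matrix

/-- The row-select matrix associated to a subset `ρ` of `{1,…,α}` of cardinality `s`:
the `s × α` matrix whose `(i,j)` entry is `1` if `j` is the `i`-th element of `ρ`
(in increasing order) and `0` otherwise. -/
def rowSelect {F : Type*} [Field F] {α s : ℕ} (ρ : Finset (Fin α)) (h : ρ.card = s) :
    Matrix (Fin s) (Fin α) F :=
  fun i j => if j = ρ.orderEmbOfFin h i then 1 else 0

/-- The column-select matrix associated to a subset `γ` of `{1,…,β}`:
the transpose of the row-select matrix. -/
def colSelect {F : Type*} [Field F] {β r : ℕ} (γ : Finset (Fin β)) (h : γ.card = r) :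
    Matrix (Fin β) (Fin r) F :=
  (rowSelect γ h)ᵀ

section aux
variable {F : Type*} [Field F]

lemma mul_colSelect {m : Type*} [Fintype m] {β r : ℕ} (A : Matrix m (Fin β) F)
    (γ : Finset (Fin β)) (h : γ.card = r) (i : m) (k : Fin r) :
    (A * colSelect (F := F) γ h) i k = A i (γ.orderEmbOfFin h k) := by
  simp [mul_apply, colSelect, rowSelect, transpose_apply]

lemma rowSelect_mul_colSelect_self {β r : ℕ} (γ : Finset (Fin β)) (h : γ.card = r) :
    rowSelect (F := F) γ h * colSelect (F := F) γ h = 1 := by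
  ext i k
  rw [mul_colSelect]
  simp only [rowSelect, one_apply, (γ.orderEmbOfFin h).injective.eq_iff]
  exact if_congr eq_comm rfl rfl

lemma rowSelect_mul_colSelect_disjoint {β r s : ℕ} (γ δ : Finset (Fin β))
    (hγ : γ.card = r) (hδ : δ.card = s) (hdisj : ∀ x, x ∈ γ → x ∉ δ) :
    rowSelect (F := F) γ hγ * colSelect (F := F) δ hδ = 0 := by
  ext i k
  rw [mul_colSelect]
  simp only [rowSelect, Matrix.zero_apply, ite_eq_right_iff]
  intro heq
  have h1 : γ.orderEmbOfFin hγ i ∈ γ := Finset.orderEmbOfFin_mem γ hγ i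
  have h2 : δ.orderEmbOfFin hδ k ∈ δ := Finset.orderEmbOfFin_mem δ hδ k
  exact absurd (heq ▸ h2) (hdisj _ h1)

lemma finrank_submodule_prod {M M' : Type*} [AddCommGroup M] [AddCommGroup M']
    [Module F M] [Module F M'] [FiniteDimensional F M] [FiniteDimensional F M']
    (p : Submodule F M) (q : Submodule F M') :
    Module.finrank F (p.prod q) = Module.finrank F p + Module.finrank F q := by
  rw [LinearMap.prod_eq_sup_map]
  have h1 : Module.finrank F (p.map (LinearMap.inl F M M')) = Module.finrank F p :=
    (Submodule.equivMapOfInjective _ LinearMap.inl_injective p).symm.finrank_eq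
  have h2 : Module.finrank F (q.map (LinearMap.inr F M M')) = Module.finrank F q :=
    (Submodule.equivMapOfInjective _ LinearMap.inr_injective q).symm.finrank_eq
  have hinf : p.map (LinearMap.inl F M M') ⊓ q.map (LinearMap.inr F M M') = ⊥ := by
    rw [Submodule.map_inl, Submodule.map_inr]
    ext ⟨x, y⟩
    simp +contextual [Prod.ext_iff]
  have := Submodule.finrank_sup_add_finrank_inf_eq
    (p.map (LinearMap.inl F M M')) (q.map (LinearMap.inr F M M'))
  rw [hinf, finrank_bot, add_zero, h1, h2] at this
  exact this

lemma rank_fromBlocks_one_zero_zero {r s t : ℕ} (D : Matrix (Fin t) (Fin s) F) :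
    (fromBlocks (1 : Matrix (Fin r) (Fin r) F) 0 0 D).rank = r + D.rank := by
  classical
  set e₁ := LinearEquiv.sumArrowLequivProdArrow (Fin r) (Fin s) F F with he₁
  set e₂ := LinearEquiv.sumArrowLequivProdArrow (Fin r) (Fin t) F F with he₂
  set g := (LinearMap.id (R := F) (M := Fin r → F)).prodMap D.mulVecLin with hg
  have key : (fromBlocks (1 : Matrix (Fin r) (Fin r) F) 0 0 D).mulVecLin =
      e₂.symm.toLinearMap ∘ₗ g ∘ₗ e₁.toLinearMap := by
    apply LinearMap.ext; intro v
    funext i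
    cases i with
    | inl i =>
      simp [mulVecLin_apply, mulVec, dotProduct, Fintype.sum_sum_type, fromBlocks,
        he₁, he₂, hg, LinearEquiv.sumArrowLequivProdArrow, one_apply, ite_mul]
    | inr j =>
      simp [mulVecLin_apply, mulVec, dotProduct, Fintype.sum_sum_type, fromBlocks,
        he₁, he₂, hg, LinearEquiv.sumArrowLequivProdArrow]
  have hrange : LinearMap.range g =
      (⊤ : Submodule F (Fin r → F)).prod (LinearMap.range D.mulVecLin) := by
    ext ⟨y1, y2⟩
    simp only [LinearMap.mem_range, hg, LinearMap.prodMap_apply, LinearMap.id_apply,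
      Submodule.mem_prod, Submodule.mem_top, true_and, Prod.mk.injEq, Prod.exists]
    constructor
    · rintro ⟨x1, x2, h1, h2⟩; exact ⟨x2, h2⟩
    · rintro ⟨x2, h2⟩; exact ⟨y1, x2, rfl, h2⟩
  rw [Matrix.rank, key, LinearMap.range_comp,
    LinearMap.range_comp_of_range_eq_top _ e₁.range, hrange,
    LinearEquiv.finrank_map_eq, finrank_submodule_prod, finrank_top,
    Module.finrank_pi, Fintype.card_fin]
  rfl

end aux

/-- ClearDown rank identity: if the columns of `H₁ ∈ F^{r×β}` indexed by `γ` form `−1_r`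
and `R₀ := H₁ γ̄ᵀ`, then for every `C ∈ F^{α×β}`, stacking `H₁` on top of `C` gives a
matrix of rank `r + rank(C γ̄ᵀ + (C γᵀ) R₀)`. -/
theorem clearDown_rank
    {F : Type*} [Field F] {β r : ℕ} (hβ : 0 < β) (hr : 0 < r)
    (γ : Finset (Fin β)) (hγ : γ.card = r)
    (H₁ : Matrix (Fin r) (Fin β) F)
    (hpiv : H₁ * colSelect (F := F) γ hγ = -1)
    {α : ℕ} (C : Matrix (Fin α) (Fin β) F) :
    (Matrix.fromRows H₁ C).rank =
      r + (C * colSelect (F := F) (r := β - r) γᶜ (by simp [Finset.card_compl, hγ]) +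
            (C * colSelect (F := F) γ hγ) *
              (H₁ * colSelect (F := F) (r := β - r) γᶜ
                (by simp [Finset.card_compl, hγ]))).rank := by
  classical
  have hrβ : r ≤ β := by
    have := Finset.card_le_univ γ
    simpa [hγ] using this
  have hcompl : γᶜ.card = β - r := by simp [Finset.card_compl, hγ]
  set P := colSelect (F := F) γ hγ with hP
  set Q := colSelect (F := F) γᶜ hcompl with hQ
  set X := C * P with hX
  set C' := C + X * H₁ with hC'
  set B := H₁ * Q with hB
  set D := C * Q + X * B with hD
  -- row select matrices
  set Rγ := rowSelect (F := F) γ hγ with hRγ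
  set Rδ := rowSelect (F := F) γᶜ hcompl with hRδ
  set E := fromCols P Q with hE
  have hEtE : fromRows Rγ Rδ * E = 1 := by
    rw [hE, fromRows_mul_fromCols, rowSelect_mul_colSelect_self,
      rowSelect_mul_colSelect_self,
      rowSelect_mul_colSelect_disjoint γ γᶜ hγ hcompl (fun x hx => by simp [hx]),
      rowSelect_mul_colSelect_disjoint γᶜ γ hcompl hγ (fun x hx => by
        simpa using hx),
      fromBlocks_one]
  have eβ : Fin β ≃ Fin r ⊕ Fin (β - r) :=
    (finCongr (Nat.add_sub_cancel' hrβ).symm).trans finSumFinEquiv.symm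
  have hEEt : E * fromRows Rγ Rδ = 1 :=
    (fromCols_mul_fromRows_eq_one_comm eβ P Q Rγ Rδ).mpr hEtE
  -- Step 1: row clearing
  have hdetL : IsUnit (fromBlocks (1 : Matrix (Fin r) (Fin r) F) 0 X 1).det := by
    simp [Matrix.det_fromBlocks_zero₁₂]
  have step1 : (fromRows H₁ C).rank = (fromRows H₁ C').rank := by
    have hmul : fromBlocks (1 : Matrix (Fin r) (Fin r) F) 0 X (1 : Matrix (Fin α) (Fin α) F) * fromRows H₁ C =
        fromRows H₁ C' := by
      rw [fromBlocks_mul_fromRows, hC']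
      simp [add_comm]
    rw [← hmul, rank_mul_eq_right_of_isUnit_det _ _ hdetL]
  -- Step 2: column permutation
  have step2 : (fromRows H₁ C').rank = (fromRows H₁ C' * E).rank := by
    refine le_antisymm ?_ (rank_mul_le_left _ _)
    have h := rank_mul_le_left (fromRows H₁ C' * E) (fromRows Rγ Rδ)
    rwa [Matrix.mul_assoc, hEEt, Matrix.mul_one] at h
  have hblocks : fromRows H₁ C' * E = fromBlocks (-1) B 0 D := by
    have h21 : C' * P = 0 := by
      rw [hC', Matrix.add_mul, Matrix.mul_assoc, hpiv]
      simp [hX]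
    have h22 : C' * Q = D := by
      rw [hC', hD, Matrix.add_mul, Matrix.mul_assoc, hB]
    rw [hE, fromRows_mul_fromCols, hpiv, h21, h22, hB]
  -- Step 3: clear B
  have hdetU : IsUnit (fromBlocks (1 : Matrix (Fin r) (Fin r) F) (-B) 0 1).det := by
    simp [Matrix.det_fromBlocks_zero₂₁]
  have step3 : (fromBlocks (-1 : Matrix (Fin r) (Fin r) F) B 0 D).rank =
      (fromBlocks (-1 : Matrix (Fin r) (Fin r) F) 0 0 D).rank := by
    have : fromBlocks (-1 : Matrix (Fin r) (Fin r) F) 0 0 D *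
        fromBlocks (1 : Matrix (Fin r) (Fin r) F) (-B) 0 (1 : Matrix (Fin (β - r)) (Fin (β - r)) F) =
        fromBlocks (-1 : Matrix (Fin r) (Fin r) F) B 0 D := by
      rw [fromBlocks_multiply]
      simp
    rw [← this, rank_mul_eq_left_of_isUnit_det _ _ hdetU]
  -- Step 4: -1 to 1
  have hdetN : IsUnit (fromBlocks (-1 : Matrix (Fin r) (Fin r) F) 0 0
      (1 : Matrix (Fin α) (Fin α) F)).det := by
    have hsq : fromBlocks (-1 : Matrix (Fin r) (Fin r) F) 0 0
        (1 : Matrix (Fin α) (Fin α) F) * fromBlocks (-1) 0 0 1 = 1 := by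
      rw [fromBlocks_multiply]
      simp [fromBlocks_one]
    exact (isUnit_iff_isUnit_det _).mp ⟨⟨_, _, hsq, hsq⟩, rfl⟩
  have step4 : (fromBlocks (-1 : Matrix (Fin r) (Fin r) F) 0 0 D).rank = r + D.rank := by
    have : fromBlocks (-1 : Matrix (Fin r) (Fin r) F) 0 0
        (1 : Matrix (Fin α) (Fin α) F) * fromBlocks (1 : Matrix (Fin r) (Fin r) F) 0 0 D =
        fromBlocks (-1 : Matrix (Fin r) (Fin r) F) 0 0 D := by
      rw [fromBlocks_multiply]
      simp
    rw [← this, rank_mul_eq_right_of_isUnit_det _ _ hdetN,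
      rank_fromBlocks_one_zero_zero]
  rw [step1, step2, hblocks, step3, step4]
end
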